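/- Let G be a finite simple graph all of whose star-factors have the same number of edges, and suppose G contains a triangle v₁v₂v₃ in which v₂ and v₃ have degree two in G and v₁ has degree at least three. Then every neighbor of v₁ other than v₂ and v₃ is a stem of G. -/

import Mathlib

open SimpleGraph

/-- `S` is a star-factor of `G`: a spanning subgraph (as a `SimpleGraph` on the same
vertex set with `S ≤ G`) in which every vertex has a neighbor and every edge has an
endpoint of degree one, i.e. every connected component is a star `K_{1,n}`, `n ≥ 1`. -/
def IsStarFactor {V : Type*} (G S : SimpleGraph V) : Prop :=
  S ≤ G ∧ (∀ v, ∃ u, S.Adj v u) ∧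
    ∀ ⦃u v⦄, S.Adj u v → (∀ w, S.Adj u w → w = v) ∨ (∀ w, S.Adj v w → w = u)

section Aux
variable {V : Type*}

/-- Star graph centered at `c` with leaf set `T`. -/
def starG (c : V) (T : Set V) : SimpleGraph V where
  Adj a b := a ≠ b ∧ ((a = c ∧ b ∈ T) ∨ (b = c ∧ a ∈ T))
  symm := ⟨by rintro a b ⟨h1, h2⟩; exact ⟨h1.symm, h2.symm⟩⟩
  loopless := ⟨fun a h => h.1 rfl⟩

lemma starG_adj {c : V} {T : Set V} {a b : V} :
    (starG c T).Adj a b ↔ a ≠ b ∧ ((a = c ∧ b ∈ T) ∨ (b = c ∧ a ∈ T)) := Iff.rfl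

lemma starG_le {G : SimpleGraph V} {c : V} {T : Set V} (h : ∀ t ∈ T, G.Adj c t) :
    starG c T ≤ G := by
  rintro a b ⟨hne, ⟨rfl, hb⟩ | ⟨rfl, ha⟩⟩
  · exact h b hb
  · exact (h a ha).symm

lemma starG_support {c : V} {T : Set V} {a b : V} (h : (starG c T).Adj a b) :
    a = c ∨ a ∈ T := by
  rcases h.2 with ⟨rfl, _⟩ | ⟨_, ha⟩
  · exact Or.inl rfl
  · exact Or.inr ha

/-- Every component of `S` is a star. -/
def StarCond (S : SimpleGraph V) : Prop :=
  ∀ ⦃u v⦄, S.Adj u v → (∀ w, S.Adj u w → w = v) ∨ (∀ w, S.Adj v w → w = u)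

lemma starCond_starG (c : V) (T : Set V) : StarCond (starG c T) := by
  rintro a b ⟨hne, ⟨rfl, hb⟩ | ⟨rfl, ha⟩⟩
  · right
    rintro w ⟨hbw, ⟨hbc, _⟩ | ⟨rfl, _⟩⟩
    · exact absurd hbc.symm hne
    · rfl
  · left
    rintro w ⟨haw, ⟨hac, _⟩ | ⟨rfl, _⟩⟩
    · exact absurd hac hne
    · rfl

lemma starCond_sup {S T : SimpleGraph V} (hS : StarCond S) (hT : StarCond T)
    (hd : ∀ a, (∃ b, S.Adj a b) → (∃ c, T.Adj a c) → False) :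
    StarCond (S ⊔ T) := by
  rintro u v (h | h)
  · rcases hS h with h1 | h1
    · left; rintro w (hw | hw)
      · exact h1 w hw
      · exact (hd u ⟨v, h⟩ ⟨w, hw⟩).elim
    · right; rintro w (hw | hw)
      · exact h1 w hw
      · exact (hd v ⟨u, h.symm⟩ ⟨w, hw⟩).elim
  · rcases hT h with h1 | h1
    · left; rintro w (hw | hw)
      · exact (hd u ⟨w, hw⟩ ⟨v, h⟩).elim
      · exact h1 w hw
    · right; rintro w (hw | hw)
      · exact (hd v ⟨w, hw⟩ ⟨u, h.symm⟩).elim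
      · exact h1 w hw

lemma exists_cover [Fintype V] (G : SimpleGraph V) (n : ℕ) :
    ∀ A : Set V, A.ncard ≤ n → (∀ v ∈ A, ∃ u ∈ A, G.Adj v u) →
    ∃ S : SimpleGraph V, S ≤ G ∧ (∀ v ∈ A, ∃ u, S.Adj v u) ∧
      (∀ ⦃a b⦄, S.Adj a b → a ∈ A) ∧ StarCond S := by
  induction n with
  | zero =>
    intro A hA _
    have hAe : A = ∅ := Set.ncard_eq_zero (Set.toFinite A) |>.mp (Nat.le_zero.mp hA)
    refine ⟨⊥, bot_le, ?_, ?_, ?_⟩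
    · intro v hv; rw [hAe] at hv; exact hv.elim
    · rintro a b ⟨⟩
    · rintro a b ⟨⟩
  | succ n ih =>
    intro A hA hcov
    rcases A.eq_empty_or_nonempty with rfl | ⟨v, hv⟩
    · refine ⟨⊥, bot_le, ?_, ?_, ?_⟩
      · rintro a ⟨⟩
      · rintro a b ⟨⟩
      · rintro a b ⟨⟩
    obtain ⟨u, hu, hadj⟩ := hcov v hv
    classical
    set B : Set V := {w | w ∈ A ∧ w ≠ u ∧ w ≠ v ∧ ∀ z ∈ A, G.Adj w z → z = u ∨ z = v}
      with hBdef
    set Bu : Set V := {w ∈ B | G.Adj u w} with hBudef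
    set Bv : Set V := {w ∈ B | ¬ G.Adj u w} with hBvdef
    set C : Set V := {u, v} ∪ B with hCdef
    have hCA : C ⊆ A := by
      rintro w (hw | hw)
      · rcases hw with rfl | rfl
        · exact hu
        · exact hv
      · exact hw.1
    have huv : u ≠ v := hadj.ne'
    have hBvadj : ∀ w ∈ Bv, G.Adj v w := by
      rintro w ⟨hwB, hwn⟩
      obtain ⟨z, hz, hwz⟩ := hcov w hwB.1
      rcases hwB.2.2.2 z hz hwz with rfl | rfl
      · exact absurd hwz.symm hwn
      · exact hwz.symm
    set A' : Set V := A \ C with hA'def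
    have hA'n : A'.ncard ≤ n := by
      have hss : A' ⊂ A := by
        refine ⟨Set.diff_subset, fun hsub => ?_⟩
        have : v ∈ A' := hsub hv
        exact this.2 (Or.inl (Or.inr rfl))
      have := Set.ncard_lt_ncard hss (Set.toFinite A)
      omega
    have hA'cov : ∀ w ∈ A', ∃ z ∈ A', G.Adj w z := by
      rintro w ⟨hwA, hwC⟩
      have hwu : w ≠ u := fun h => hwC (Or.inl (Or.inl h))
      have hwv : w ≠ v := fun h => hwC (Or.inl (Or.inr h))
      have hwB : w ∉ B := fun h => hwC (Or.inr h)
      have : ¬ ∀ z ∈ A, G.Adj w z → z = u ∨ z = v := by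
        intro h; exact hwB ⟨hwA, hwu, hwv, h⟩
      push_neg at this
      obtain ⟨z, hzA, hwz, hzuv⟩ := this
      refine ⟨z, ⟨hzA, ?_⟩, hwz⟩
      rintro (hz | hzB)
      · rcases hz with rfl | rfl
        · exact hzuv.1 rfl
        · exact hzuv.2 rfl
      · rcases hzB.2.2.2 w hwA hwz.symm with rfl | rfl
        · exact hwu rfl
        · exact hwv rfl
    obtain ⟨S', hS'le, hS'cov, hS'supp, hS'cond⟩ := ih A' hA'n hA'cov
    have hmain : ∃ S₀ : SimpleGraph V, S₀ ≤ G ∧ (∀ w ∈ C, ∃ z, S₀.Adj w z) ∧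
        (∀ ⦃a b⦄, S₀.Adj a b → a ∈ C) ∧ StarCond S₀ := by
      rcases eq_or_ne Bv ∅ with hBv | hBvne
      · refine ⟨starG u (insert v Bu), starG_le ?_, ?_, ?_, starCond_starG _ _⟩
        · rintro t (rfl | ht)
          · exact hadj.symm
          · exact ht.2
        · rintro w (hw | hwB)
          · rcases hw with rfl | rfl
            · exact ⟨v, huv, Or.inl ⟨rfl, Or.inl rfl⟩⟩
            · exact ⟨u, huv.symm, Or.inr ⟨rfl, Or.inl rfl⟩⟩
          · have hwBu : w ∈ Bu := by
              by_cases h : G.Adj u w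
              · exact ⟨hwB, h⟩
              · exact absurd (show w ∈ Bv from ⟨hwB, h⟩) (by rw [hBv]; exact id)
            exact ⟨u, hwB.2.1, Or.inr ⟨rfl, Or.inr hwBu⟩⟩
        · intro a b hab
          rcases starG_support hab with rfl | (rfl | ha)
          · exact Or.inl (Or.inl rfl)
          · exact Or.inl (Or.inr rfl)
          · exact Or.inr ha.1
      · rcases eq_or_ne Bu ∅ with hBu | hBune
        · refine ⟨starG v (insert u Bv), starG_le ?_, ?_, ?_, starCond_starG _ _⟩
          · rintro t (rfl | ht)
            · exact hadj
            · exact hBvadj t ht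
          · rintro w (hw | hwB)
            · rcases hw with rfl | rfl
              · exact ⟨v, huv, Or.inr ⟨rfl, Or.inl rfl⟩⟩
              · exact ⟨u, huv.symm, Or.inl ⟨rfl, Or.inl rfl⟩⟩
            · have hwBv : w ∈ Bv := by
                by_cases h : G.Adj u w
                · exact absurd (show w ∈ Bu from ⟨hwB, h⟩) (by rw [hBu]; exact id)
                · exact ⟨hwB, h⟩
              exact ⟨v, hwB.2.2.1, Or.inr ⟨rfl, Or.inr hwBv⟩⟩
          · intro a b hab
            rcases starG_support hab with rfl | (rfl | ha)
            · exact Or.inl (Or.inr rfl)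
            · exact Or.inl (Or.inl rfl)
            · exact Or.inr ha.1
        · obtain ⟨tu, htu⟩ := Set.nonempty_iff_ne_empty.mpr hBune
          obtain ⟨tv, htv⟩ := Set.nonempty_iff_ne_empty.mpr hBvne
          refine ⟨starG u Bu ⊔ starG v Bv, sup_le (starG_le ?_) (starG_le ?_), ?_, ?_, ?_⟩
          · exact fun t ht => ht.2
          · exact fun t ht => hBvadj t ht
          · rintro w (hw | hwB)
            · rcases hw with rfl | rfl
              · exact ⟨tu, Or.inl ⟨htu.1.2.1.symm, Or.inl ⟨rfl, htu⟩⟩⟩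
              · exact ⟨tv, Or.inr ⟨htv.1.2.2.1.symm, Or.inl ⟨rfl, htv⟩⟩⟩
            · by_cases h : G.Adj u w
              · exact ⟨u, Or.inl ⟨hwB.2.1, Or.inr ⟨rfl, hwB, h⟩⟩⟩
              · exact ⟨v, Or.inr ⟨hwB.2.2.1, Or.inr ⟨rfl, hwB, h⟩⟩⟩
          · rintro a b (hab | hab)
            · rcases starG_support hab with rfl | ha
              · exact Or.inl (Or.inl rfl)
              · exact Or.inr ha.1
            · rcases starG_support hab with rfl | ha
              · exact Or.inl (Or.inr rfl)
              · exact Or.inr ha.1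
          · refine starCond_sup (starCond_starG _ _) (starCond_starG _ _) ?_
            rintro a ⟨b, hab⟩ ⟨c, hac⟩
            rcases starG_support hab with rfl | ha
            · rcases starG_support hac with h | h
              · exact huv h
              · exact h.1.2.1 rfl
            · rcases starG_support hac with rfl | ha'
              · exact ha.1.2.2.1 rfl
              · exact ha'.2 ha.2
    obtain ⟨S₀, hS₀le, hS₀cov, hS₀supp, hS₀cond⟩ := hmain
    refine ⟨S' ⊔ S₀, sup_le hS'le hS₀le, ?_, ?_, ?_⟩
    · intro w hw
      by_cases hwC : w ∈ C
      · obtain ⟨z, hz⟩ := hS₀cov w hwC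
        exact ⟨z, Or.inr hz⟩
      · obtain ⟨z, hz⟩ := hS'cov w ⟨hw, hwC⟩
        exact ⟨z, Or.inl hz⟩
    · rintro a b (hab | hab)
      · exact (hS'supp hab).1
      · exact hCA (hS₀supp hab)
    · refine starCond_sup hS'cond hS₀cond ?_
      rintro a ⟨b, hab⟩ ⟨c, hac⟩
      exact (hS'supp hab).2 (hS₀supp hac)

lemma starG_edgeSet_insert {c a : V} (T : Set V) (h : c ≠ a) :
    (starG c (insert a T)).edgeSet = insert s(c, a) (starG c T).edgeSet := by
  ext e
  induction e using Sym2.ind with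
  | _ x y =>
    simp only [mem_edgeSet, Set.mem_insert_iff, Sym2.eq_iff]
    show (x ≠ y ∧ _) ↔ _ ∨ (x ≠ y ∧ _)
    constructor
    · rintro ⟨hxy, ⟨rfl, (rfl | hy)⟩ | ⟨rfl, (rfl | hx)⟩⟩
      · exact Or.inl (Or.inl ⟨rfl, rfl⟩)
      · exact Or.inr ⟨hxy, Or.inl ⟨rfl, hy⟩⟩
      · exact Or.inl (Or.inr ⟨rfl, rfl⟩)
      · exact Or.inr ⟨hxy, Or.inr ⟨rfl, hx⟩⟩
    · rintro ((⟨rfl, rfl⟩ | ⟨rfl, rfl⟩) | ⟨hxy, ⟨rfl, hy⟩ | ⟨rfl, hx⟩⟩)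
      · exact ⟨h, Or.inl ⟨rfl, Or.inl rfl⟩⟩
      · exact ⟨h.symm, Or.inr ⟨rfl, Or.inl rfl⟩⟩
      · exact ⟨hxy, Or.inl ⟨rfl, Or.inr hy⟩⟩
      · exact ⟨hxy, Or.inr ⟨rfl, Or.inr hx⟩⟩

lemma starG_edgeSet_empty (c : V) : (starG c (∅ : Set V)).edgeSet = ∅ := by
  ext e
  induction e using Sym2.ind with
  | _ x y =>
    simp only [mem_edgeSet, Set.mem_empty_iff_false, iff_false]
    rintro ⟨_, ⟨_, h⟩ | ⟨_, h⟩⟩ <;> exact h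

lemma starG_edgeSet_singleton {c a : V} (h : c ≠ a) :
    (starG c ({a} : Set V)).edgeSet = {s(c, a)} := by
  have h1 : ({a} : Set V) = insert a ∅ := by simp
  rw [h1, starG_edgeSet_insert _ h, starG_edgeSet_empty]
  simp

end Aux

/-- If all star-factors of `G` have the same number of edges and `G` contains a triangle
`v₁v₂v₃` with `v₂, v₃` of degree two and `v₁` of degree at least three, then every
neighbor of `v₁` other than `v₂, v₃` is a stem. -/
theorem stmt_6 {V : Type*} [Fintype V] (G : SimpleGraph V)
    (huniform : ∀ S₁ S₂ : SimpleGraph V, IsStarFactor G S₁ → IsStarFactor G S₂ →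
      S₁.edgeSet.ncard = S₂.edgeSet.ncard)
    (v₁ v₂ v₃ : V)
    (h12 : G.Adj v₁ v₂) (h23 : G.Adj v₂ v₃) (h13 : G.Adj v₁ v₃)
    (hd2 : (G.neighborSet v₂).ncard = 2) (hd3 : (G.neighborSet v₃).ncard = 2)
    (hd1 : 3 ≤ (G.neighborSet v₁).ncard)
    (hiso : ∀ v, ∃ w, G.Adj v w) :
    ∀ x, G.Adj v₁ x → x ≠ v₂ → x ≠ v₃ →
      ∃ l, G.Adj x l ∧ (G.neighborSet l).ncard = 1 := by
  intro x hx hx2 hx3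
  by_contra hstem
  push_neg at hstem
  classical
  -- the neighborhoods of v₂ and v₃ are exactly the other two triangle vertices
  have hNv2 : G.neighborSet v₂ = {v₁, v₃} := by
    refine (Set.eq_of_subset_of_ncard_le ?_ ?_ (Set.toFinite _)).symm
    · rintro z (rfl | rfl)
      · exact h12.symm
      · exact h23
    · rw [hd2, Set.ncard_pair h13.ne]
  have hNv3 : G.neighborSet v₃ = {v₁, v₂} := by
    refine (Set.eq_of_subset_of_ncard_le ?_ ?_ (Set.toFinite _)).symm
    · rintro z (rfl | rfl)
      · exact h13.symm
      · exact h23.symm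
    · rw [hd3, Set.ncard_pair h12.ne]
  -- no vertex has x as its unique neighbor
  have hstem' : ∀ y, G.neighborSet y = {x} → False := by
    intro y hy
    have hyx : G.Adj y x := by
      have : x ∈ G.neighborSet y := by rw [hy]; rfl
      exact this
    exact hstem y hyx.symm (by rw [hy]; exact Set.ncard_singleton x)
  set Y : Set V := {y | y ≠ v₁ ∧ y ≠ v₂ ∧ y ≠ v₃ ∧ y ≠ x ∧ G.neighborSet y ⊆ {v₁, x}}
    with hYdef
  have hYadj : ∀ y ∈ Y, G.Adj v₁ y := by
    intro y hy
    obtain ⟨u, hu⟩ := hiso y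
    rcases hy.2.2.2.2 hu with rfl | rfl
    · exact hu.symm
    · by_cases hv1y : G.Adj v₁ y
      · exact hv1y
      · exfalso
        apply hstem' y
        apply Set.Subset.antisymm
        · intro z hz
          rcases hy.2.2.2.2 hz with rfl | rfl
          · have hz' : G.Adj y z := hz
            exact absurd hz'.symm hv1y
          · rfl
        · exact Set.singleton_subset_iff.mpr hu
  set W : Set V := {w | w ≠ v₁ ∧ w ≠ v₂ ∧ w ≠ v₃ ∧ w ≠ x ∧ w ∉ Y} with hWdef
  have hWcov : ∀ w ∈ W, ∃ u ∈ W, G.Adj w u := by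
    rintro w ⟨hw1, hw2, hw3, hwx, hwY⟩
    have hns : ¬ G.neighborSet w ⊆ {v₁, x} := fun h => hwY ⟨hw1, hw2, hw3, hwx, h⟩
    rw [Set.not_subset] at hns
    obtain ⟨u, huN, hu'⟩ := hns
    have hwu : G.Adj w u := huN
    have hu1 : u ≠ v₁ := fun h => hu' (Or.inl h)
    have hux : u ≠ x := fun h => hu' (Or.inr h)
    have hu2 : u ≠ v₂ := by
      intro h
      have hmem : w ∈ G.neighborSet v₂ := by rw [← h]; exact hwu.symm
      rw [hNv2] at hmem
      rcases hmem with rfl | rfl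
      · exact hw1 rfl
      · exact hw3 rfl
    have hu3 : u ≠ v₃ := by
      intro h
      have hmem : w ∈ G.neighborSet v₃ := by rw [← h]; exact hwu.symm
      rw [hNv3] at hmem
      rcases hmem with rfl | rfl
      · exact hw1 rfl
      · exact hw2 rfl
    have huY : u ∉ Y := by
      intro hY
      have hmem : w ∈ ({v₁, x} : Set V) := hY.2.2.2.2 hwu.symm
      rcases hmem with rfl | rfl
      · exact hw1 rfl
      · exact hwx rfl
    exact ⟨u, ⟨hu1, hu2, hu3, hux, huY⟩, hwu⟩
  obtain ⟨S, hSle, hScov, hSsupp, hScond⟩ := exists_cover G W.ncard W le_rfl hWcov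
  set T0 : Set V := insert x Y with hT0def
  have hxT0 : x ∈ T0 := Or.inl rfl
  have hv2T0 : v₂ ∉ T0 := by
    rintro (h | h)
    · exact hx2 h.symm
    · exact h.2.1 rfl
  have hv3T0 : v₃ ∉ T0 := by
    rintro (h | h)
    · exact hx3 h.symm
    · exact h.2.2.1 rfl
  have hv1T0 : v₁ ∉ T0 := by
    rintro (h | h)
    · exact hx.ne h
    · exact h.1 rfl
  have hT0adj : ∀ t ∈ T0, G.Adj v₁ t := by
    rintro t (rfl | ht)
    · exact hx
    · exact hYadj t ht
  -- the two star factors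
  set F2 : SimpleGraph V := starG v₂ ({v₃} : Set V) ⊔ (starG v₁ T0 ⊔ S) with hF2def
  set F3 : SimpleGraph V := starG v₁ (insert v₂ (insert v₃ T0)) ⊔ S with hF3def
  have hT0W : ∀ a, (a = v₁ ∨ a ∈ T0) → a ∈ W → False := by
    rintro a (rfl | (rfl | ha)) hW
    · exact hW.1 rfl
    · exact hW.2.2.2.1 rfl
    · exact hW.2.2.2.2 ha
  have hF2 : IsStarFactor G F2 := by
    refine ⟨?_, ?_, ?_⟩
    · refine sup_le (starG_le ?_) (sup_le (starG_le hT0adj) hSle)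
      rintro t rfl
      exact h23
    · intro w
      rcases eq_or_ne w v₁ with rfl | hw1
      · exact ⟨x, Or.inr (Or.inl ⟨hx.ne, Or.inl ⟨rfl, hxT0⟩⟩)⟩
      rcases eq_or_ne w v₂ with rfl | hw2
      · exact ⟨v₃, Or.inl ⟨h23.ne, Or.inl ⟨rfl, rfl⟩⟩⟩
      rcases eq_or_ne w v₃ with rfl | hw3
      · exact ⟨v₂, Or.inl ⟨h23.ne', Or.inr ⟨rfl, rfl⟩⟩⟩
      rcases eq_or_ne w x with rfl | hwx
      · exact ⟨v₁, Or.inr (Or.inl ⟨hx.ne', Or.inr ⟨rfl, hxT0⟩⟩)⟩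
      by_cases hwY : w ∈ Y
      · exact ⟨v₁, Or.inr (Or.inl ⟨(hYadj w hwY).ne', Or.inr ⟨rfl, Or.inr hwY⟩⟩)⟩
      · obtain ⟨z, hz⟩ := hScov w ⟨hw1, hw2, hw3, hwx, hwY⟩
        exact ⟨z, Or.inr (Or.inr hz)⟩
    · refine starCond_sup (starCond_starG _ _)
        (starCond_sup (starCond_starG _ _) hScond ?_) ?_
      · rintro a ⟨b, hab⟩ ⟨c, hac⟩
        exact hT0W a (starG_support hab) (hSsupp hac)
      · rintro a ⟨b, hab⟩ ⟨c, hac⟩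
        have ha23 : a = v₂ ∨ a = v₃ := starG_support hab
        rcases ha23 with rfl | rfl
        · rcases hac with hac | hac
          · rcases starG_support hac with h | h
            · exact h12.ne' h
            · exact hv2T0 h
          · exact (hSsupp hac).2.1 rfl
        · rcases hac with hac | hac
          · rcases starG_support hac with h | h
            · exact h13.ne' h
            · exact hv3T0 h
          · exact (hSsupp hac).2.2.1 rfl
  have hF3 : IsStarFactor G F3 := by
    refine ⟨?_, ?_, ?_⟩
    · refine sup_le (starG_le ?_) hSle
      rintro t (rfl | (rfl | ht))
      · exact h12
      · exact h13
      · exact hT0adj t ht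
    · intro w
      rcases eq_or_ne w v₁ with rfl | hw1
      · exact ⟨v₂, Or.inl ⟨h12.ne, Or.inl ⟨rfl, Or.inl rfl⟩⟩⟩
      rcases eq_or_ne w v₂ with rfl | hw2
      · exact ⟨v₁, Or.inl ⟨h12.ne', Or.inr ⟨rfl, Or.inl rfl⟩⟩⟩
      rcases eq_or_ne w v₃ with rfl | hw3
      · exact ⟨v₁, Or.inl ⟨h13.ne', Or.inr ⟨rfl, Or.inr (Or.inl rfl)⟩⟩⟩
      rcases eq_or_ne w x with rfl | hwx
      · exact ⟨v₁, Or.inl ⟨hx.ne', Or.inr ⟨rfl, Or.inr (Or.inr hxT0)⟩⟩⟩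
      by_cases hwY : w ∈ Y
      · exact ⟨v₁, Or.inl ⟨(hYadj w hwY).ne', Or.inr ⟨rfl, Or.inr (Or.inr (Or.inr hwY))⟩⟩⟩
      · obtain ⟨z, hz⟩ := hScov w ⟨hw1, hw2, hw3, hwx, hwY⟩
        exact ⟨z, Or.inr hz⟩
    · refine starCond_sup (starCond_starG _ _) hScond ?_
      rintro a ⟨b, hab⟩ ⟨c, hac⟩
      have hW := hSsupp hac
      rcases starG_support hab with rfl | (rfl | (rfl | ha))
      · exact hW.1 rfl
      · exact hW.2.1 rfl
      · exact hW.2.2.1 rfl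
      · exact hT0W a (Or.inr ha) hW
  -- edge counts
  set E0 : Set (Sym2 V) := (starG v₁ T0).edgeSet ∪ S.edgeSet with hE0def
  have hE2 : F2.edgeSet = insert s(v₂, v₃) E0 := by
    rw [hF2def, edgeSet_sup, edgeSet_sup, starG_edgeSet_singleton h23.ne,
      Set.singleton_union]
  have hE3 : F3.edgeSet = insert s(v₁, v₂) (insert s(v₁, v₃) E0) := by
    rw [hF3def, edgeSet_sup, starG_edgeSet_insert _ h12.ne, starG_edgeSet_insert _ h13.ne,
      Set.insert_union, Set.insert_union]
  have hm1 : s(v₂, v₃) ∉ E0 := by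
    rintro (h | h)
    · have h' := (mem_edgeSet _).mp h
      rcases h'.2 with ⟨h1, _⟩ | ⟨h1, _⟩
      · exact h12.ne' h1
      · exact h13.ne' h1
    · exact (hSsupp ((mem_edgeSet _).mp h)).2.1 rfl
  have hm2 : s(v₁, v₃) ∉ E0 := by
    rintro (h | h)
    · have h' := (mem_edgeSet _).mp h
      rcases h'.2 with ⟨_, h1⟩ | ⟨h1, _⟩
      · exact hv3T0 h1
      · exact h13.ne' h1
    · exact (hSsupp ((mem_edgeSet _).mp h)).1 rfl
  have hm3 : s(v₁, v₂) ∉ insert s(v₁, v₃) E0 := by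
    rintro (h | h)
    · rw [Sym2.eq_iff] at h
      rcases h with ⟨_, h⟩ | ⟨h, _⟩
      · exact h23.ne h
      · exact h13.ne h
    · rcases h with h | h
      · have h' := (mem_edgeSet _).mp h
        rcases h'.2 with ⟨_, h1⟩ | ⟨h1, _⟩
        · exact hv2T0 h1
        · exact h12.ne' h1
      · exact (hSsupp ((mem_edgeSet _).mp h)).1 rfl
  have hc2 : F2.edgeSet.ncard = E0.ncard + 1 := by
    rw [hE2, Set.ncard_insert_of_notMem hm1]
  have hc3 : F3.edgeSet.ncard = E0.ncard + 2 := by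
    rw [hE3, Set.ncard_insert_of_notMem hm3, Set.ncard_insert_of_notMem hm2]
  have := huniform F2 F3 hF2 hF3
  omega
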